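/- Consider n balls thrown independently and uniformly at random into m bins, where n = k·m, k ≥ 20, n ≥ 5k, and p = 1/m. Let B_i be the number of balls in bin i and X = ∑_{i=1}^{m} max(B_i − k, 0). Then for every δ ≥ 0, P(X ≥ (1+δ)·E[X]) ≤ exp(−δ²·m·0.99·(1−p)/(πk)). -/

import Mathlib

open Finset

/-- Number of balls landing in bin `i` when the throw outcome is `ω`
(ball `j` lands in bin `ω j`). -/
def binCount (n m : ℕ) (i : Fin m) (ω : Fin n → Fin m) : ℕ :=
  (Finset.univ.filter fun j => ω j = i).card

/-- The total overflow: number of balls exceeding the capacity `k` of their bin. -/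
noncomputable def overflowX (n m k : ℕ) (ω : Fin n → Fin m) : ℝ :=
  ∑ i : Fin m, max ((binCount n m i ω : ℝ) - (k : ℝ)) 0

/-- Expectation of a real-valued random variable on the uniform space of
functions `Fin n → Fin m` (balls-into-bins model). -/
noncomputable def expec (n m : ℕ) (f : (Fin n → Fin m) → ℝ) : ℝ :=
  (∑ ω : Fin n → Fin m, f ω) / (Fintype.card (Fin n → Fin m) : ℝ)

open scoped Classical in
/-- Probability of an event on the uniform space of functions `Fin n → Fin m`. -/
noncomputable def prob (n m : ℕ) (P : (Fin n → Fin m) → Prop) : ℝ :=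
  ((Finset.univ.filter P).card : ℝ) / (Fintype.card (Fin n → Fin m) : ℝ)

namespace SpareHoeffdingAux

lemma sum_split {m N : ℕ} (F : (Fin (N + 1) → Fin m) → ℝ) :
    ∑ ω : Fin (N + 1) → Fin m, F ω = ∑ a : Fin m, ∑ ω : Fin N → Fin m, F (Fin.cons a ω) := by
  rw [← (Fin.consEquiv fun _ => Fin m).sum_comp F, Fintype.sum_prod_type]
  rfl

lemma sum_one (m N : ℕ) : ∑ _ω : Fin N → Fin m, (1:ℝ) = (m:ℝ)^N := by
  rw [Finset.sum_const, Finset.card_univ, Fintype.card_fun]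
  simp

lemma card_fun_real (m N : ℕ) : ((Fintype.card (Fin N → Fin m) : ℝ)) = (m:ℝ)^N := by
  rw [Fintype.card_fun]; simp

lemma moment_sums (m : ℕ) (c : Fin m → ℝ) (e2 e4 : ℝ)
    (h0 : ∑ a, c a = 0) (h2 : ∑ a, c a ^ 2 = m * e2) (h4 : ∑ a, c a ^ 4 = m * e4) :
    ∀ N : ℕ,
      (∑ ω : Fin N → Fin m, (∑ j, c (ω j)) = 0) ∧
      (∑ ω : Fin N → Fin m, (∑ j, c (ω j)) ^ 2 = (m : ℝ) ^ N * (N * e2)) ∧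
      (∑ ω : Fin N → Fin m, (∑ j, c (ω j)) ^ 4
        = (m : ℝ) ^ N * (3 * N * (N - 1) * e2 ^ 2 + N * e4)) := by
  intro N
  induction N with
  | zero => norm_num
  | succ N ih =>
    obtain ⟨ih1, ih2, ih4⟩ := ih
    have hT : ∀ (a : Fin m) (ω : Fin N → Fin m),
        (∑ j : Fin (N+1), c ((Fin.cons a ω : Fin (N+1) → Fin m) j)) = c a + ∑ j : Fin N, c (ω j) := by
      intro a ω; rw [Fin.sum_univ_succ]; simp
    refine ⟨?_, ?_, ?_⟩
    · rw [sum_split]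
      simp only [hT]
      have inner1 : ∀ x : ℝ, ∑ ω : Fin N → Fin m, (x + ∑ j, c (ω j))
          = (m:ℝ)^N * x := by
        intro x
        rw [Finset.sum_add_distrib, ih1, add_zero, Finset.sum_const, Finset.card_univ,
          Fintype.card_fun, nsmul_eq_mul]
        simp [Fintype.card_fin, mul_comm]
      simp only [inner1]
      rw [← Finset.mul_sum, h0, mul_zero]
    · rw [sum_split]
      simp only [hT]
      have inner2 : ∀ x : ℝ, ∑ ω : Fin N → Fin m, (x + ∑ j, c (ω j)) ^ 2
          = (m:ℝ)^N * x^2 + (m:ℝ)^N * (N * e2) := by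
        intro x
        have expand : ∀ t : ℝ, (x + t)^2 = x^2*1 + (2*x)*t + t^2 := by intro t; ring
        simp only [expand]
        rw [Finset.sum_add_distrib, Finset.sum_add_distrib,
          ← Finset.mul_sum, ← Finset.mul_sum, sum_one, ih1, ih2]
        ring
      simp only [inner2]
      rw [Finset.sum_add_distrib, ← Finset.mul_sum, h2, Finset.sum_const,
        Finset.card_univ, Fintype.card_fin, nsmul_eq_mul]
      push_cast [pow_succ]
      ring
    · rw [sum_split]
      simp only [hT]
      have inner4 : ∀ x : ℝ, ∑ ω : Fin N → Fin m, (x + ∑ j, c (ω j)) ^ 4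
          = (m:ℝ)^N * x^4 + (6*((m:ℝ)^N * (N * e2))) * x^2
            + (4*∑ ω : Fin N → Fin m, (∑ j, c (ω j))^3) * x
            + (m:ℝ)^N * (3 * N * (N - 1) * e2 ^ 2 + N * e4) := by
        intro x
        have expand : ∀ t : ℝ, (x + t)^4 = x^4*1 + (4*x^3)*t + (6*x^2)*t^2 + (4*x)*t^3 + t^4 := by
          intro t; ring
        simp only [expand]
        rw [Finset.sum_add_distrib, Finset.sum_add_distrib, Finset.sum_add_distrib,
          Finset.sum_add_distrib, ← Finset.mul_sum, ← Finset.mul_sum, ← Finset.mul_sum,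
          ← Finset.mul_sum, sum_one, ih1, ih2, ih4]
        ring
      simp only [inner4]
      rw [Finset.sum_add_distrib, Finset.sum_add_distrib, Finset.sum_add_distrib,
        ← Finset.mul_sum, ← Finset.mul_sum, ← Finset.mul_sum, h4, h2, h0,
        Finset.sum_const, Finset.card_univ, Fintype.card_fin, nsmul_eq_mul]
      push_cast [pow_succ]
      ring

lemma cosh_step (m : ℕ) (lam : ℝ) (W : Fin m → ℝ) (h0 : ∑ a, W a = 0)
    (h1 : ∀ a, |W a| ≤ 1) :
    ∑ a : Fin m, Real.exp (lam * W a) ≤ (m:ℝ) * Real.exp (lam^2/2) := by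
  have key : ∀ a, Real.exp (lam * W a) ≤ Real.cosh lam + W a * Real.sinh lam := by
    intro a
    have hw1 : -1 ≤ W a := (abs_le.1 (h1 a)).1
    have hw2 : W a ≤ 1 := (abs_le.1 (h1 a)).2
    have hc := convexOn_exp.2 (Set.mem_univ (-lam)) (Set.mem_univ lam)
      (by linarith : (0:ℝ) ≤ (1 - W a)/2) (by linarith : (0:ℝ) ≤ (1 + W a)/2)
      (by ring : (1 - W a)/2 + (1 + W a)/2 = 1)
    simp only [smul_eq_mul] at hc
    calc Real.exp (lam * W a) = Real.exp ((1 - W a)/2 * (-lam) + (1 + W a)/2 * lam) := by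
          ring_nf
      _ ≤ (1 - W a)/2 * Real.exp (-lam) + (1 + W a)/2 * Real.exp lam := hc
      _ = Real.cosh lam + W a * Real.sinh lam := by
          rw [Real.cosh_eq, Real.sinh_eq]; ring
  calc ∑ a : Fin m, Real.exp (lam * W a)
      ≤ ∑ a : Fin m, (Real.cosh lam + W a * Real.sinh lam) :=
        Finset.sum_le_sum fun a _ => key a
    _ = (m:ℝ) * Real.cosh lam := by
        rw [Finset.sum_add_distrib, ← Finset.sum_mul, h0, Finset.sum_const,
          Finset.card_univ, Fintype.card_fin, nsmul_eq_mul]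
        ring
    _ ≤ (m:ℝ) * Real.exp (lam^2/2) := by
        have := Real.cosh_le_exp_half_sq lam
        have hm : (0:ℝ) ≤ m := Nat.cast_nonneg m
        nlinarith [this]

lemma mgf_bound (m : ℕ) (hm : 0 < m) (lam : ℝ) :
    ∀ (N : ℕ) (f : (Fin N → Fin m) → ℝ),
      (∀ (ω : Fin N → Fin m) (j : Fin N) (a : Fin m), f (Function.update ω j a) ≤ f ω + 1) →
      ∑ ω : Fin N → Fin m, Real.exp (lam * (f ω - (∑ ω' : Fin N → Fin m, f ω') / (m:ℝ)^N))
        ≤ (m:ℝ)^N * Real.exp (N * (lam^2/2)) := by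
  intro N
  induction N with
  | zero =>
    intro f _
    rw [Fintype.sum_unique (fun ω : Fin 0 → Fin m =>
        Real.exp (lam * (f ω - (∑ ω' : Fin 0 → Fin m, f ω') / (m:ℝ)^0))),
      Fintype.sum_unique f]
    simp
  | succ N ih =>
    intro f hf
    have hmR : (0:ℝ) < m := by exact_mod_cast hm
    set g : (Fin N → Fin m) → ℝ := fun ω => (∑ a : Fin m, f (Fin.cons a ω)) / m with hg
    have havg : (∑ ω' : Fin (N+1) → Fin m, f ω') / (m:ℝ)^(N+1)
        = (∑ ω' : Fin N → Fin m, g ω') / (m:ℝ)^N := by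
      rw [sum_split f, Finset.sum_comm]
      have : ∀ ω : Fin N → Fin m, ∑ a : Fin m, f (Fin.cons a ω) = (m:ℝ) * g ω := by
        intro ω; rw [hg]; field_simp
      rw [Finset.sum_congr rfl fun ω _ => this ω, ← Finset.mul_sum]
      rw [pow_succ]
      field_simp
    have hdev : ∀ (a : Fin m) (ω : Fin N → Fin m), |f (Fin.cons a ω) - g ω| ≤ 1 := by
      intro a ω
      have hpair : ∀ b : Fin m, |f (Fin.cons a ω) - f (Fin.cons b ω)| ≤ 1 := by
        intro b
        have hab : (Fin.cons a ω : Fin (N+1) → Fin m)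
            = Function.update (Fin.cons b ω : Fin (N+1) → Fin m) 0 a := by
          funext j
          refine Fin.cases ?_ ?_ j
          · simp
          · intro i; simp [Function.update_of_ne (Fin.succ_ne_zero i)]
        have hba : (Fin.cons b ω : Fin (N+1) → Fin m)
            = Function.update (Fin.cons a ω : Fin (N+1) → Fin m) 0 b := by
          funext j
          refine Fin.cases ?_ ?_ j
          · simp
          · intro i; simp [Function.update_of_ne (Fin.succ_ne_zero i)]
        rw [abs_le]
        constructor
        · have := hf (Fin.cons a ω) 0 b; rw [← hba] at this; linarith
        · have := hf (Fin.cons b ω) 0 a; rw [← hab] at this; linarith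
      have : f (Fin.cons a ω) - g ω
          = (∑ b : Fin m, (f (Fin.cons a ω) - f (Fin.cons b ω))) / m := by
        rw [Finset.sum_sub_distrib, Finset.sum_const, Finset.card_univ, Fintype.card_fin,
          nsmul_eq_mul, hg]
        field_simp
      rw [this, abs_div, abs_of_pos hmR]
      rw [div_le_one hmR]
      calc |∑ b : Fin m, (f (Fin.cons a ω) - f (Fin.cons b ω))|
          ≤ ∑ b : Fin m, |f (Fin.cons a ω) - f (Fin.cons b ω)| := Finset.abs_sum_le_sum_abs _ _
        _ ≤ ∑ _b : Fin m, (1:ℝ) := Finset.sum_le_sum fun b _ => hpair b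
        _ = (m:ℝ) := by simp
    have hgf : ∀ (ω : Fin N → Fin m) (j : Fin N) (a : Fin m),
        g (Function.update ω j a) ≤ g ω + 1 := by
      intro ω j a
      rw [hg]
      have : ∀ b : Fin m, f (Fin.cons b (Function.update ω j a)) ≤ f (Fin.cons b ω) + 1 := by
        intro b
        rw [Fin.cons_update]
        exact hf (Fin.cons b ω) j.succ a
      calc (∑ b : Fin m, f (Fin.cons b (Function.update ω j a))) / m
          ≤ (∑ b : Fin m, (f (Fin.cons b ω) + 1)) / m := by
            gcongr
            exact this _
        _ = (∑ b : Fin m, f (Fin.cons b ω)) / m + 1 := by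
            rw [Finset.sum_add_distrib, Finset.sum_const, Finset.card_univ, Fintype.card_fin,
              nsmul_eq_mul, mul_one, add_div]
            field_simp
    have key : ∀ ω : Fin N → Fin m,
        ∑ a : Fin m, Real.exp (lam * (f (Fin.cons a ω) - (∑ ω' : Fin (N+1) → Fin m, f ω') / (m:ℝ)^(N+1)))
          ≤ Real.exp (lam * (g ω - (∑ ω' : Fin N → Fin m, g ω') / (m:ℝ)^N)) * ((m:ℝ) * Real.exp (lam^2/2)) := by
      intro ω
      have hW0 : ∑ a : Fin m, (f (Fin.cons a ω) - g ω) = 0 := by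
        rw [Finset.sum_sub_distrib, Finset.sum_const, Finset.card_univ, Fintype.card_fin,
          nsmul_eq_mul, hg]
        field_simp
        ring
      have hsplit : ∀ a : Fin m,
          Real.exp (lam * (f (Fin.cons a ω) - (∑ ω' : Fin (N+1) → Fin m, f ω') / (m:ℝ)^(N+1)))
            = Real.exp (lam * (g ω - (∑ ω' : Fin N → Fin m, g ω') / (m:ℝ)^N))
              * Real.exp (lam * (f (Fin.cons a ω) - g ω)) := by
        intro a
        rw [havg, ← Real.exp_add]
        congr 1
        ring
      rw [Finset.sum_congr rfl fun a _ => hsplit a, ← Finset.mul_sum]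
      exact mul_le_mul_of_nonneg_left (cosh_step m lam _ hW0 (fun a => hdev a ω))
        (Real.exp_nonneg _)
    calc ∑ ω : Fin (N+1) → Fin m,
          Real.exp (lam * (f ω - (∑ ω' : Fin (N+1) → Fin m, f ω') / (m:ℝ)^(N+1)))
        = ∑ a : Fin m, ∑ ω : Fin N → Fin m,
            Real.exp (lam * (f (Fin.cons a ω) - (∑ ω' : Fin (N+1) → Fin m, f ω') / (m:ℝ)^(N+1))) :=
          sum_split _
      _ = ∑ ω : Fin N → Fin m, ∑ a : Fin m,
            Real.exp (lam * (f (Fin.cons a ω) - (∑ ω' : Fin (N+1) → Fin m, f ω') / (m:ℝ)^(N+1))) :=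
          Finset.sum_comm
      _ ≤ ∑ ω : Fin N → Fin m,
            Real.exp (lam * (g ω - (∑ ω' : Fin N → Fin m, g ω') / (m:ℝ)^N))
              * ((m:ℝ) * Real.exp (lam^2/2)) :=
          Finset.sum_le_sum fun ω _ => key ω
      _ = (∑ ω : Fin N → Fin m,
            Real.exp (lam * (g ω - (∑ ω' : Fin N → Fin m, g ω') / (m:ℝ)^N)))
              * ((m:ℝ) * Real.exp (lam^2/2)) := by rw [Finset.sum_mul]
      _ ≤ ((m:ℝ)^N * Real.exp (N * (lam^2/2))) * ((m:ℝ) * Real.exp (lam^2/2)) :=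
          mul_le_mul_of_nonneg_right (ih g hgf) (by positivity)
      _ = (m:ℝ)^(N+1) * Real.exp ((N+1 : ℕ) * (lam^2/2)) := by
          push_cast
          rw [add_mul, one_mul, Real.exp_add, pow_succ]
          ring

lemma binCount_update_le (n m : ℕ) (i : Fin m) (ω : Fin n → Fin m) (j : Fin n) (a : Fin m) :
    binCount n m i (Function.update ω j a) ≤ binCount n m i ω + (if i = a then 1 else 0) := by
  by_cases hia : i = a
  · subst hia
    simp only [if_pos rfl]
    have hsub : (Finset.univ.filter fun j' => Function.update ω j i j' = i)
        ⊆ insert j (Finset.univ.filter fun j' => ω j' = i) := by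
      intro j' hj'
      simp only [Finset.mem_filter, Finset.mem_univ, true_and] at hj'
      rcases eq_or_ne j' j with rfl | hne
      · exact Finset.mem_insert_self _ _
      · rw [Function.update_of_ne hne] at hj'
        exact Finset.mem_insert_of_mem (by simp [hj'])
    calc binCount n m i (Function.update ω j i)
        ≤ (insert j (Finset.univ.filter fun j' => ω j' = i)).card :=
          Finset.card_le_card hsub
      _ ≤ (Finset.univ.filter fun j' => ω j' = i).card + 1 := Finset.card_insert_le _ _
  · simp only [if_neg hia, add_zero]
    apply Finset.card_le_card
    intro j' hj'
    simp only [Finset.mem_filter, Finset.mem_univ, true_and] at hj' ⊢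
    rcases eq_or_ne j' j with rfl | hne
    · rw [Function.update_self] at hj'; exact absurd hj'.symm hia
    · rwa [Function.update_of_ne hne] at hj'

lemma overflow_lip (n m k : ℕ) (ω : Fin n → Fin m) (j : Fin n) (a : Fin m) :
    overflowX n m k (Function.update ω j a) ≤ overflowX n m k ω + 1 := by
  have key : ∀ i : Fin m,
      max ((binCount n m i (Function.update ω j a) : ℝ) - k) 0
        ≤ max ((binCount n m i ω : ℝ) - k) 0 + (if i = a then 1 else 0) := by
    intro i
    have h := binCount_update_le n m i ω j a
    have hR : (binCount n m i (Function.update ω j a) : ℝ)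
        ≤ (binCount n m i ω : ℝ) + (if i = a then 1 else 0) := by
      by_cases hia : i = a <;> simp [hia] at h ⊢ <;> exact_mod_cast h
    apply max_le
    · have : (binCount n m i (Function.update ω j a) : ℝ) - k
          ≤ ((binCount n m i ω : ℝ) - k) + (if i = a then 1 else 0) := by linarith
      exact this.trans (by gcongr; exact le_max_left _ _)
    · positivity
  calc overflowX n m k (Function.update ω j a)
      ≤ ∑ i : Fin m, (max ((binCount n m i ω : ℝ) - k) 0 + (if i = a then 1 else 0)) :=
        Finset.sum_le_sum fun i _ => key i
    _ = overflowX n m k ω + 1 := by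
        rw [Finset.sum_add_distrib]
        simp [overflowX]

lemma cs_lb {A C Q F B : ℝ} (hA : 0 ≤ A) (hC : 0 ≤ C) (hQpos : 0 < Q)
    (h1 : Q^2 ≤ A*C) (h2 : C^2 ≤ Q*F) (hB : 0 ≤ B) (hBF : B^2 * F ≤ Q^3) : B ≤ A := by
  have hF0 : 0 < F := by
    by_contra hcon
    push_neg at hcon
    have hC2 : C^2 ≤ 0 := le_trans h2 (mul_nonpos_of_nonneg_of_nonpos hQpos.le hcon)
    have hCz : C = 0 := by nlinarith [sq_nonneg C]
    rw [hCz, mul_zero] at h1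
    nlinarith
  have h3 : Q^4 ≤ A^2 * C^2 := by nlinarith [mul_self_le_mul_self (sq_nonneg Q) h1]
  have h4 : A^2*C^2 ≤ A^2*(Q*F) := mul_le_mul_of_nonneg_left h2 (sq_nonneg A)
  have h45 : Q^4 ≤ A^2*(Q*F) := le_trans h3 h4
  have h5 : Q^3 ≤ A^2*F := le_of_mul_le_mul_left
    (by nlinarith [h45] : Q*Q^3 ≤ Q*(A^2*F)) hQpos
  have hB2 : B^2 * F ≤ A^2 * F := le_trans hBF h5
  have hBA : B^2 ≤ A^2 := le_of_mul_le_mul_right (by linarith [hB2] : B^2 * F ≤ A^2 * F) hF0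
  nlinarith

lemma chernoff_count (m : ℕ) (hm : 0 < m) (N : ℕ) (f : (Fin N → Fin m) → ℝ)
    (hf : ∀ (ω : Fin N → Fin m) (j : Fin N) (a : Fin m), f (Function.update ω j a) ≤ f ω + 1)
    (lam t : ℝ) (hlam : 0 ≤ lam) (P : (Fin N → Fin m) → Prop) [DecidablePred P]
    (hP : ∀ ω, P ω → t ≤ f ω) :
    ((Finset.univ.filter P).card : ℝ)
      ≤ (m:ℝ)^N * Real.exp (N*(lam^2/2) + lam * ((∑ ω : Fin N → Fin m, f ω)/(m:ℝ)^N) - lam*t) := by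
  have hmgf := mgf_bound m hm lam N f hf
  set A : ℝ := (∑ ω : Fin N → Fin m, f ω)/(m:ℝ)^N with hA
  have key : ((Finset.univ.filter P).card : ℝ) * Real.exp (lam * t)
      ≤ (m:ℝ)^N * Real.exp (N*(lam^2/2) + lam * A) := by
    calc ((Finset.univ.filter P).card : ℝ) * Real.exp (lam * t)
        = ∑ _ω ∈ Finset.univ.filter P, Real.exp (lam * t) := by
          rw [Finset.sum_const, nsmul_eq_mul]
      _ ≤ ∑ ω ∈ Finset.univ.filter P, Real.exp (lam * f ω) := by
          apply Finset.sum_le_sum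
          intro ω hω
          exact Real.exp_le_exp.2 (mul_le_mul_of_nonneg_left (hP ω (Finset.mem_filter.1 hω).2) hlam)
      _ ≤ ∑ ω : Fin N → Fin m, Real.exp (lam * f ω) :=
          Finset.sum_le_sum_of_subset_of_nonneg (Finset.filter_subset _ _)
            (fun ω _ _ => Real.exp_nonneg _)
      _ = (∑ ω : Fin N → Fin m, Real.exp (lam * (f ω - A))) * Real.exp (lam * A) := by
          rw [Finset.sum_mul]
          apply Finset.sum_congr rfl
          intro ω _
          rw [← Real.exp_add]
          congr 1
          ring
      _ ≤ ((m:ℝ)^N * Real.exp (N*(lam^2/2))) * Real.exp (lam * A) :=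
          mul_le_mul_of_nonneg_right hmgf (Real.exp_nonneg _)
      _ = (m:ℝ)^N * Real.exp (N*(lam^2/2) + lam * A) := by
          rw [Real.exp_add]; ring
  have hexp : (0:ℝ) < Real.exp (lam * t) := Real.exp_pos _
  rw [show (N:ℝ)*(lam^2/2) + lam * ((∑ ω : Fin N → Fin m, f ω)/(m:ℝ)^N) - lam*t
      = ((N:ℝ)*(lam^2/2) + lam * A) - lam * t from by rw [hA],
    Real.exp_sub, ← mul_div_assoc, le_div_iff₀ hexp]
  exact key

lemma abs_cs1 {ι : Type*} [Fintype ι] (D : ι → ℝ) :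
    (∑ ω, D ω^2)^2 ≤ (∑ ω, |D ω|) * (∑ ω, |D ω|^3) := by
  have hcs := Finset.sum_mul_sq_le_sq_mul_sq Finset.univ
    (fun ω => Real.sqrt |D ω|) (fun ω => |D ω| * Real.sqrt |D ω|)
  calc (∑ ω, D ω^2)^2
      = (∑ ω, Real.sqrt |D ω| * (|D ω| * Real.sqrt |D ω|))^2 := by
        congr 1
        refine Finset.sum_congr rfl fun ω _ => ?_
        rw [show Real.sqrt |D ω| * (|D ω| * Real.sqrt |D ω|)
            = (Real.sqrt |D ω| * Real.sqrt |D ω|) * |D ω| from by ring,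
          Real.mul_self_sqrt (abs_nonneg _), ← sq_abs]
        ring
    _ ≤ (∑ ω, Real.sqrt |D ω|^2) * (∑ ω, (|D ω| * Real.sqrt |D ω|)^2) := hcs
    _ = (∑ ω, |D ω|) * (∑ ω, |D ω|^3) := by
        congr 1
        · exact Finset.sum_congr rfl fun ω _ => Real.sq_sqrt (abs_nonneg _)
        · refine Finset.sum_congr rfl fun ω _ => ?_
          rw [mul_pow, Real.sq_sqrt (abs_nonneg _)]
          ring

lemma abs_cs2 {ι : Type*} [Fintype ι] (D : ι → ℝ) :
    (∑ ω, |D ω|^3)^2 ≤ (∑ ω, D ω^2) * (∑ ω, D ω^4) := by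
  have hcs := Finset.sum_mul_sq_le_sq_mul_sq Finset.univ (fun ω => |D ω|) (fun ω => D ω^2)
  calc (∑ ω, |D ω|^3)^2 = (∑ ω, |D ω| * D ω^2)^2 := by
        congr 1
        refine Finset.sum_congr rfl fun ω _ => ?_
        rw [← sq_abs]; ring
    _ ≤ (∑ ω, |D ω|^2) * (∑ ω, (D ω^2)^2) := hcs
    _ = (∑ ω, D ω^2) * (∑ ω, D ω^4) := by
        congr 1
        · exact Finset.sum_congr rfl fun ω _ => sq_abs _
        · exact Finset.sum_congr rfl fun ω _ => by ring

lemma abs_lower {ι : Type*} [Fintype ι] (D : ι → ℝ) {Nc sv : ℝ} (hsv : 0 < sv)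
    (hNc : 0 < Nc)
    (hQ : ∑ ω, D ω^2 = Nc * sv) (hF : ∑ ω, D ω^4 ≤ Nc * (sv*(3*sv+1))) :
    Nc * Real.sqrt (sv^2/(3*sv+1)) ≤ ∑ ω, |D ω| := by
  have h3s : (0:ℝ) < 3*sv+1 := by linarith
  have hβ2 : (Real.sqrt (sv^2/(3*sv+1)))^2 = sv^2/(3*sv+1) := Real.sq_sqrt (by positivity)
  refine cs_lb (C := ∑ ω, |D ω|^3) (Q := ∑ ω, D ω^2) (F := ∑ ω, D ω^4)
    (by positivity) (by positivity) (by rw [hQ]; positivity) (abs_cs1 D) (abs_cs2 D)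
    (by positivity) ?_
  rw [hQ, mul_pow, hβ2]
  calc Nc^2 * (sv^2/(3*sv+1)) * (∑ ω, D ω^4)
      ≤ (Nc^2 * (sv^2/(3*sv+1))) * (Nc * (sv*(3*sv+1))) :=
        mul_le_mul_of_nonneg_left hF (by positivity)
    _ = (Nc*sv)^3 := by field_simp

end SpareHoeffdingAux

set_option maxHeartbeats 2000000 in
open SpareHoeffdingAux in
open scoped Classical in
/-- **Hoeffding bound.** -/
theorem spare_deviation_hoeffding (n m k : ℕ) (hn : n = k * m)
    (hk : 20 ≤ k) (hn5 : 5 * k ≤ n) (p : ℝ) (hp : p = 1 / (m : ℝ))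
    (δ : ℝ) (hδ : 0 ≤ δ) :
    prob n m (fun ω => (1 + δ) * expec n m (overflowX n m k) ≤ overflowX n m k ω)
      ≤ Real.exp (-δ ^ 2 * (m : ℝ) * 0.99 * (1 - p) / (Real.pi * (k : ℝ))) := by
  -- basic numeric facts
  have hk0 : 0 < k := by omega
  have hm5 : 5 ≤ m := by
    have h5 : k * 5 ≤ k * m := by rw [hn] at hn5; linarith
    exact Nat.le_of_mul_le_mul_left h5 hk0
  have hm0 : 0 < m := by omega
  have hmR : (5:ℝ) ≤ (m:ℝ) := by exact_mod_cast hm5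
  have hm0R : (0:ℝ) < (m:ℝ) := by positivity
  have hkR : (20:ℝ) ≤ (k:ℝ) := by exact_mod_cast hk
  have hk0R : (0:ℝ) < (k:ℝ) := by linarith
  have hnR : (n:ℝ) = (k:ℝ) * (m:ℝ) := by rw [hn]; push_cast; ring
  have hn0 : 0 < n := by rw [hn]; positivity
  have hn0R : (0:ℝ) < (n:ℝ) := by exact_mod_cast hn0
  have hp0 : 0 < p := by rw [hp]; positivity
  have hp5 : p ≤ 1/5 := by
    rw [hp]
    rw [div_le_div_iff₀ hm0R (by norm_num : (0:ℝ) < 5)]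
    linarith
  set q : ℝ := 1 - p with hq
  have hq45 : 4/5 ≤ q := by rw [hq]; linarith
  have hq1 : q ≤ 1 := by rw [hq]; linarith
  have hq0 : 0 < q := by linarith
  have hmp : (m:ℝ) * p = 1 := by rw [hp]; field_simp
  have hnp : (n:ℝ) * p = (k:ℝ) := by rw [hnR, hp]; field_simp
  set s : ℝ := (k:ℝ) * q with hs
  have hs16 : 16 ≤ s := by rw [hs]; nlinarith
  have hs0 : 0 < s := by linarith
  have h3s : (0:ℝ) < 3*s+1 := by linarith
  -- per-bin second and fourth moments
  have moments : ∀ i : Fin m,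
      (∑ ω : Fin n → Fin m, ((binCount n m i ω : ℝ) - (k:ℝ))^2 = (m:ℝ)^n * s) ∧
      (∑ ω : Fin n → Fin m, ((binCount n m i ω : ℝ) - (k:ℝ))^4 ≤ (m:ℝ)^n * (s*(3*s+1))) := by
    intro i
    set c : Fin m → ℝ := fun a => (if a = i then (1:ℝ) else 0) - p with hc
    have hsum_ite : ∑ a : Fin m, (if a = i then (1:ℝ) else 0) = 1 := by
      rw [Finset.sum_ite_eq' Finset.univ i (fun _ => (1:ℝ))]
      simp
    have h0 : ∑ a, c a = 0 := by
      simp only [hc]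
      rw [Finset.sum_sub_distrib, hsum_ite, Finset.sum_const, Finset.card_univ,
        Fintype.card_fin, nsmul_eq_mul]
      linarith [hmp]
    have h2 : ∑ a, c a ^ 2 = (m:ℝ) * (p*q) := by
      have hpt : ∀ a : Fin m, c a ^ 2 = (if a = i then (1:ℝ) else 0) * (q^2 - p^2) + p^2 := by
        intro a
        by_cases h : a = i <;> simp only [hc, h, if_pos, if_true, if_neg, if_false, hq] <;> ring
      rw [Finset.sum_congr rfl fun a _ => hpt a, Finset.sum_add_distrib, ← Finset.sum_mul,
        hsum_ite, Finset.sum_const, Finset.card_univ, Fintype.card_fin, nsmul_eq_mul, one_mul]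
      linear_combination (2*p - 1) * hmp
    have h4 : ∑ a, c a ^ 4 = (m:ℝ) * (p*q*(q^3+p^3)) := by
      have hpt : ∀ a : Fin m, c a ^ 4 = (if a = i then (1:ℝ) else 0) * (q^4 - p^4) + p^4 := by
        intro a
        by_cases h : a = i <;> simp only [hc, h, if_pos, if_true, if_neg, if_false, hq] <;> ring
      rw [Finset.sum_congr rfl fun a _ => hpt a, Finset.sum_add_distrib, ← Finset.sum_mul,
        hsum_ite, Finset.sum_const, Finset.card_univ, Fintype.card_fin, nsmul_eq_mul, one_mul]
      linear_combination (p^4 - q^4) * hmp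
    obtain ⟨S1, S2, S4⟩ := moment_sums m c (p*q) (p*q*(q^3+p^3)) h0 h2 h4 n
    have hD : ∀ ω : Fin n → Fin m, (binCount n m i ω : ℝ) - (k:ℝ) = ∑ j, c (ω j) := by
      intro ω
      have hbc : (binCount n m i ω : ℝ) = ∑ j, (if ω j = i then (1:ℝ) else 0) := by
        have hcf : binCount n m i ω = ∑ j, (if ω j = i then 1 else 0) :=
          Finset.card_filter _ _
        rw [hcf]
        push_cast
        rfl
      simp only [hc]
      rw [Finset.sum_sub_distrib, ← hbc, Finset.sum_const, Finset.card_univ,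
        Fintype.card_fin, nsmul_eq_mul, hnp]
    constructor
    · rw [Finset.sum_congr rfl fun ω _ => by rw [hD ω]]
      rw [S2, hs, ← hnp]
      ring
    · rw [Finset.sum_congr rfl fun ω _ => by rw [hD ω]]
      rw [S4]
      have hnpq : (n:ℝ) * (p*q) = s := by rw [hs, ← hnp]; ring
      have hq3p3 : q^3 + p^3 ≤ 1 := by
        rw [hq]
        nlinarith [mul_pos hp0 hq0]
      have hpq0 : 0 < p*q := by positivity
      have hn1 : (1:ℝ) ≤ (n:ℝ) := by exact_mod_cast hn0
      have hmn0 : (0:ℝ) < (m:ℝ)^n := by positivity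
      have id1 : 3 * (n:ℝ) * ((n:ℝ) - 1) * (p*q)^2 = 3*s^2 - 3*s*(p*q) := by
        rw [← hnpq]; ring
      have id2 : (n:ℝ) * (p*q*(q^3+p^3)) = s*(q^3+p^3) := by
        rw [← hnpq]; ring
      have e2 : s*(q^3+p^3) ≤ s := by
        nlinarith [mul_le_mul_of_nonneg_left hq3p3 hs0.le]
      have hcore : 3 * (n:ℝ) * ((n:ℝ) - 1) * (p*q)^2 + (n:ℝ) * (p*q*(q^3+p^3)) ≤ s*(3*s+1) := by
        rw [id1, id2]
        nlinarith [mul_pos hs0 hpq0]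
      exact mul_le_mul_of_nonneg_left hcore hmn0.le
  -- abbreviations
  have hmn0 : (0:ℝ) < (m:ℝ)^n := by positivity
  set β : ℝ := Real.sqrt (s^2/(3*s+1)) with hβ
  have hβ0 : 0 ≤ β := Real.sqrt_nonneg _
  have hβ2 : β^2 = s^2/(3*s+1) := Real.sq_sqrt (by positivity)
  have absLB : ∀ i : Fin m,
      (m:ℝ)^n * β ≤ ∑ ω : Fin n → Fin m, |(binCount n m i ω : ℝ) - (k:ℝ)| := fun i =>
    abs_lower _ hs0 hmn0 (moments i).1 (moments i).2
  -- pointwise identity  X = (1/2) ∑_i |B_i - k|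
  have hXpt : ∀ ω : Fin n → Fin m, overflowX n m k ω
      = (∑ i : Fin m, |(binCount n m i ω : ℝ) - (k:ℝ)|)/2 := by
    intro ω
    have hcntN : ∑ i : Fin m, binCount n m i ω = n := by
      simp_rw [binCount, Finset.card_filter]
      rw [Finset.sum_comm]
      simp
    have hcnt : ∑ i : Fin m, ((binCount n m i ω : ℝ)) = (n:ℝ) := by
      exact_mod_cast congrArg (Nat.cast : ℕ → ℝ) hcntN
    have hsum0 : ∑ i : Fin m, ((binCount n m i ω : ℝ) - (k:ℝ)) = 0 := by
      rw [Finset.sum_sub_distrib, hcnt, Finset.sum_const, Finset.card_univ, Fintype.card_fin,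
        nsmul_eq_mul, hnR]
      ring
    have hmax : ∀ x : ℝ, max x 0 = (x + |x|)/2 := by
      intro x
      rcases le_total 0 x with h | h
      · rw [max_eq_left h, abs_of_nonneg h]; ring
      · rw [max_eq_right h, abs_of_nonpos h]; ring
    simp only [overflowX]
    rw [Finset.sum_congr rfl fun i _ => hmax ((binCount n m i ω : ℝ) - (k:ℝ)),
      ← Finset.sum_div, Finset.sum_add_distrib, hsum0, zero_add]
  have hEX : ∑ ω : Fin n → Fin m, overflowX n m k ω
      = (∑ i : Fin m, ∑ ω : Fin n → Fin m, |(binCount n m i ω : ℝ) - (k:ℝ)|)/2 := by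
    rw [Finset.sum_congr rfl fun ω _ => hXpt ω, ← Finset.sum_div, Finset.sum_comm]
  set μ := expec n m (overflowX n m k) with hμdef
  have hμ : μ = (∑ ω : Fin n → Fin m, overflowX n m k ω) / (m:ℝ)^n := by
    rw [hμdef, expec, card_fun_real]
  have hμlb : (m:ℝ) * β / 2 ≤ μ := by
    rw [hμ, hEX]
    rw [le_div_iff₀ hmn0]
    have hsumLB : (m:ℝ) * ((m:ℝ)^n * β)
        ≤ ∑ i : Fin m, ∑ ω : Fin n → Fin m, |(binCount n m i ω : ℝ) - (k:ℝ)| := by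
      calc (m:ℝ) * ((m:ℝ)^n * β) = ∑ _i : Fin m, (m:ℝ)^n * β := by
            rw [Finset.sum_const, Finset.card_univ, Fintype.card_fin, nsmul_eq_mul]
        _ ≤ ∑ i : Fin m, ∑ ω : Fin n → Fin m, |(binCount n m i ω : ℝ) - (k:ℝ)| :=
            Finset.sum_le_sum fun i _ => absLB i
    linarith
  have hμ0 : 0 ≤ μ := le_trans (by positivity) hμlb
  -- Chernoff bound
  set lam : ℝ := δ * μ / n with hlam
  have hlam0 : 0 ≤ lam := by
    rw [hlam]; exact div_nonneg (mul_nonneg hδ hμ0) hn0R.le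
  have havg : (∑ ω : Fin n → Fin m, overflowX n m k ω)/(m:ℝ)^n = μ := hμ.symm
  -- the exponent comparison
  have hpi : (3.1415:ℝ) ≤ Real.pi := by
    have := Real.pi_gt_d6; linarith
  have hpik : (0:ℝ) < Real.pi * k := by positivity
  have core : 7.92 * q * (3*s+1) ≤ Real.pi * s^2 := by
    nlinarith [mul_nonneg (sub_nonneg.2 hq1) (by linarith : (0:ℝ) ≤ 3*s+1),
      mul_nonneg (by linarith : (0:ℝ) ≤ s) (by linarith : (0:ℝ) ≤ s - 16),
      mul_nonneg (by linarith : (0:ℝ) ≤ Real.pi - 3.1415) (sq_nonneg s)]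
  have hkey : (m:ℝ)*0.99*q/(Real.pi*k) ≤ (m:ℝ)^2*s^2/(8*(3*s+1)*n) := by
    rw [div_le_div_iff₀ hpik (by positivity)]
    rw [hnR]
    linarith [mul_le_mul_of_nonneg_right core
      (by positivity : (0:ℝ) ≤ (k:ℝ)*(m:ℝ)^2)]
  have hμsq : (m:ℝ)^2*s^2/(4*(3*s+1)) ≤ μ^2 := by
    have h1 : ((m:ℝ)*β/2)^2 ≤ μ^2 := pow_le_pow_left₀ (by positivity) hμlb 2
    have h2 : ((m:ℝ)*β/2)^2 = (m:ℝ)^2*s^2/(4*(3*s+1)) := by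
      rw [div_pow, mul_pow, hβ2]
      field_simp
      ring
    linarith [h1, h2.symm.le, h2.le]
  have hcmp : (m:ℝ)*0.99*q/(Real.pi*k) ≤ μ^2/(2*n) := by
    calc (m:ℝ)*0.99*q/(Real.pi*k) ≤ (m:ℝ)^2*s^2/(8*(3*s+1)*n) := hkey
      _ = ((m:ℝ)^2*s^2/(4*(3*s+1)))/(2*(n:ℝ)) := by
          rw [div_div]
          congr 1
          ring
      _ ≤ μ^2/(2*n) := by gcongr
  -- apply the Chernoff counting bound
  simp only [prob]
  rw [card_fun_real, div_le_iff₀ hmn0]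
  refine le_trans (chernoff_count m hm0 n (overflowX n m k)
    (fun ω j a => overflow_lip n m k ω j a) lam ((1+δ)*μ) hlam0 _
    (fun ω h => h)) ?_
  rw [havg]
  have hE1 : (n:ℝ)*(lam^2/2) + lam*μ - lam*((1+δ)*μ) = -(δ^2*μ^2/(2*(n:ℝ))) := by
    rw [hlam]
    field_simp
    ring
  have hle : (n:ℝ)*(lam^2/2) + lam*μ - lam*((1+δ)*μ)
      ≤ -δ^2*(m:ℝ)*0.99*q/(Real.pi*(k:ℝ)) := by
    rw [hE1]
    have h1 : δ^2 * ((m:ℝ)*0.99*q/(Real.pi*k)) ≤ δ^2 * (μ^2/(2*(n:ℝ))) :=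
      mul_le_mul_of_nonneg_left hcmp (sq_nonneg δ)
    have e2 : -(δ^2*μ^2/(2*(n:ℝ))) = -(δ^2*(μ^2/(2*(n:ℝ)))) := by ring
    have e1 : -δ^2*(m:ℝ)*0.99*q/(Real.pi*(k:ℝ))
        = -(δ^2*((m:ℝ)*0.99*q/(Real.pi*(k:ℝ)))) := by ring
    rw [e2, e1]
    exact neg_le_neg h1
  calc (m:ℝ)^n * Real.exp ((n:ℝ)*(lam^2/2) + lam*μ - lam*((1+δ)*μ))
      ≤ (m:ℝ)^n * Real.exp (-δ^2*(m:ℝ)*0.99*q/(Real.pi*(k:ℝ))) :=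
        mul_le_mul_of_nonneg_left (Real.exp_le_exp.2 hle) hmn0.le
    _ = Real.exp (-δ^2*(m:ℝ)*0.99*q/(Real.pi*(k:ℝ))) * (m:ℝ)^n := mul_comm _ _
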